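/- Let Y_1, Y_2, … be mutually independent real-valued random variables, S_k = Y_1 + ⋯ + Y_k. If h ≥ 0 satisfies E[e^{h Y_j}] ≤ 1 for every j ≥ 1, then for every u > 0: P[sup_{k≥1} S_k > u] ≤ e^{−hu} · E[e^{h Y_1}] ≤ e^{−hu}. In particular every such h also satisfies sup_{k≥1} E[e^{h S_k}] ≤ 1. -/

import Mathlib

open MeasureTheory ProbabilityTheory

namespace Stmt4Aux

variable {Ω : Type*} [MeasurableSpace Ω] {P : Measure Ω} [IsProbabilityMeasure P]
  {Y : ℕ → Ω → ℝ}

omit [IsProbabilityMeasure P] in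
lemma indep_aux (hmeas : ∀ i, Measurable (Y i))
    (hindep : iIndepFun Y P)
    (k : ℕ) (G : (↥(Finset.range k) → ℝ) → ENNReal) (hG : Measurable G)
    (ψ : ℝ → ENNReal) (hψ : Measurable ψ) :
    IndepFun (fun ω => G (fun j => Y j ω)) (fun ω => ψ (Y k ω)) P := by
  have h1 := hindep.indepFun_finset (Finset.range k) {k}
    (by simp [Finset.disjoint_singleton_right]) hmeas
  have h2 : Measurable fun v : (↥({k} : Finset ℕ) → ℝ) =>
      ψ (v ⟨k, Finset.mem_singleton_self k⟩) := hψ.comp (measurable_pi_apply _)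
  exact h1.comp hG h2

lemma le_aux (hmeas : ∀ i, Measurable (Y i))
    (hindep : iIndepFun Y P) (h : ℝ)
    (k : ℕ) (G : (↥(Finset.range k) → ℝ) → ENNReal) (hG : Measurable G)
    (hb : ∫⁻ ω, ENNReal.ofReal (Real.exp (h * Y k ω)) ∂P ≤ 1) :
    ∫⁻ ω, G (fun j => Y j ω) * ENNReal.ofReal (Real.exp (h * Y k ω)) ∂P ≤
      ∫⁻ ω, G (fun j => Y j ω) ∂P := by
  have hψ : Measurable fun x : ℝ => ENNReal.ofReal (Real.exp (h * x)) :=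
    ENNReal.measurable_ofReal.comp (Real.measurable_exp.comp (measurable_const_mul h))
  have hind := indep_aux hmeas hindep k G hG _ hψ
  have hGm : Measurable fun ω => G (fun j : ↥(Finset.range k) => Y j ω) :=
    hG.comp (measurable_pi_lambda _ fun j => hmeas j)
  have hψY : Measurable (fun ω => ENNReal.ofReal (Real.exp (h * Y k ω))) := by
    exact hψ.comp (hmeas k)
  rw [lintegral_mul_eq_lintegral_mul_lintegral_of_indepFun'' hGm.aemeasurable
    hψY.aemeasurable hind]
  calc (∫⁻ ω, G (fun j => Y j ω) ∂P) * ∫⁻ ω, ENNReal.ofReal (Real.exp (h * Y k ω)) ∂P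
      ≤ (∫⁻ ω, G (fun j => Y j ω) ∂P) * 1 := mul_le_mul_right hb _
    _ = _ := mul_one _

end Stmt4Aux

/-- Corollary 1.
`Y j` stands for `Y_{j+1}` and `S k = Y_1 + ⋯ + Y_k = ∑_{j < k} Y j`.
If `h ≥ 0` satisfies `E[e^{h Y_j}] ≤ 1` for every `j ≥ 1`, then for every `u > 0`:
`P[sup_{k≥1} S_k > u] ≤ e^{-h u} · E[e^{h Y_1}] ≤ e^{-h u}`, and in particular
`sup_{k≥1} E[e^{h S_k}] ≤ 1`. -/
theorem stmt4 {Ω : Type*} [MeasurableSpace Ω] (P : Measure Ω) [IsProbabilityMeasure P]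
    (Y : ℕ → Ω → ℝ)
    (hmeas : ∀ i, Measurable (Y i))
    (hindep : iIndepFun Y P)
    (S : ℕ → Ω → ℝ) (hS : ∀ k ω, S k ω = ∑ j ∈ Finset.range k, Y j ω)
    (h : ℝ) (hh : 0 ≤ h)
    (hbound : ∀ j : ℕ, ∫⁻ ω, ENNReal.ofReal (Real.exp (h * Y j ω)) ∂P ≤ 1) :
    (∀ u : ℝ, 0 < u →
      P (⋃ k : ℕ, {ω | u < S (k + 1) ω}) ≤
        ENNReal.ofReal (Real.exp (-h * u)) *
          ∫⁻ ω, ENNReal.ofReal (Real.exp (h * Y 0 ω)) ∂P ∧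
      ENNReal.ofReal (Real.exp (-h * u)) *
          (∫⁻ ω, ENNReal.ofReal (Real.exp (h * Y 0 ω)) ∂P) ≤
        ENNReal.ofReal (Real.exp (-h * u))) ∧
    (⨆ k : ℕ, ∫⁻ ω, ENNReal.ofReal (Real.exp (h * S (k + 1) ω)) ∂P) ≤ 1 := by
  classical
  have hSmeas : ∀ k, Measurable (S k) := by
    intro k
    have hEq : S k = fun ω => ∑ j ∈ Finset.range k, Y j ω := funext (hS k)
    rw [hEq]
    exact Finset.measurable_sum _ fun j _ => hmeas j
  have hψ : ∀ m : ℕ, Measurable fun ω => ENNReal.ofReal (Real.exp (h * S m ω)) := fun m =>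
    ENNReal.measurable_ofReal.comp (Real.measurable_exp.comp ((hSmeas m).const_mul h))
  -- ext map used to view functions of the first `n` variables as functions on a product
  set ext : ∀ n : ℕ, (↥(Finset.range n) → ℝ) → (ℕ → ℝ) :=
    fun n v m => if hm : m ∈ Finset.range n then v ⟨m, hm⟩ else 0 with hextdef
  have hext : ∀ n, Measurable (ext n) := by
    intro n
    apply measurable_pi_lambda
    intro m
    by_cases hm : m ∈ Finset.range n
    · have hEq : (fun v : ↥(Finset.range n) → ℝ => ext n v m) = fun v => v ⟨m, hm⟩ := by
        funext v; simp only [hextdef]; rw [dif_pos hm]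
      rw [hEq]; exact measurable_pi_apply _
    · have hEq : (fun v : ↥(Finset.range n) → ℝ => ext n v m) = fun _ => (0 : ℝ) := by
        funext v; simp only [hextdef]; rw [dif_neg hm]
      rw [hEq]; exact measurable_const
  have hextY : ∀ n (ω : Ω) (m : ℕ), m ∈ Finset.range n →
      ext n (fun j : ↥(Finset.range n) => Y j ω) m = Y m ω := by
    intro n ω m hm
    simp only [hextdef]
    rw [dif_pos hm]
  -- the partial sums of `ext n (restriction of Y)` agree with `S`
  have hextS : ∀ n (ω : Ω) (j : ℕ), j < n →
      ∑ i ∈ Finset.range (j + 1), ext n (fun j : ↥(Finset.range n) => Y j ω) i = S (j + 1) ω := by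
    intro n ω j hj
    rw [hS]
    refine Finset.sum_congr rfl fun i hi => ?_
    exact hextY n ω i (Finset.mem_range.2 (lt_of_lt_of_le (Finset.mem_range.1 hi) hj))
  constructor
  · intro u hu
    set B : ℕ → Set Ω := fun k => {ω | ∀ j ∈ Finset.range k, S (j + 1) ω ≤ u} with hBdef
    set A : ℕ → Set Ω := fun k => B k ∩ {ω | u < S (k + 1) ω} with hAdef
    have hBmeas : ∀ k, MeasurableSet (B k) := by
      intro k
      have hEq : B k = ⋂ j ∈ Finset.range k, {ω | S (j + 1) ω ≤ u} := by
        ext ω; simp [hBdef]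
      rw [hEq]
      exact MeasurableSet.biInter (Finset.range k).countable_toSet
        (fun j _ => measurableSet_le (hSmeas _) measurable_const)
    have hAmeas : ∀ k, MeasurableSet (A k) :=
      fun k => (hBmeas k).inter (measurableSet_lt measurable_const (hSmeas _))
    set g : ℕ → Ω → ENNReal := fun k ω => ENNReal.ofReal (Real.exp (h * S (k + 1) ω)) with hgdef
    set c : ℕ → ENNReal := fun k => ∫⁻ ω in B k, g k ω ∂P with hcdef
    have hc0 : c 0 = ∫⁻ ω, ENNReal.ofReal (Real.exp (h * Y 0 ω)) ∂P := by
      have hB0 : B 0 = Set.univ := by ext ω; simp [hBdef]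
      rw [hcdef]
      simp only [hB0, Measure.restrict_univ]
      refine lintegral_congr fun ω => ?_
      simp [hgdef, hS 1 ω, Finset.sum_range_one]
    -- the key supermartingale step
    have hstep : ∀ k, ENNReal.ofReal (Real.exp (h * u)) * P (A k) + c (k + 1) ≤ c k := by
      intro k
      -- Step 1 : c (k+1) ≤ ∫⁻ ω in B (k+1), g k ω
      have h1 : c (k + 1) ≤ ∫⁻ ω in B (k + 1), g k ω ∂P := by
        set T : Set (ℕ → ℝ) :=
          {w | ∀ j ∈ Finset.range (k + 1), (∑ i ∈ Finset.range (j + 1), w i) ≤ u} with hTdef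
        have hT : MeasurableSet T := by
          have hEq : T = ⋂ j ∈ Finset.range (k + 1),
              {w : ℕ → ℝ | (∑ i ∈ Finset.range (j + 1), w i) ≤ u} := by
            ext w; simp [hTdef]
          rw [hEq]
          exact MeasurableSet.biInter (Finset.range (k + 1)).countable_toSet fun j _ =>
            measurableSet_le (Finset.measurable_sum _ fun i _ => measurable_pi_apply i)
              measurable_const
        set Φ : (ℕ → ℝ) → ENNReal := T.indicator
          (fun w => ENNReal.ofReal (Real.exp (h * ∑ i ∈ Finset.range (k + 1), w i))) with hΦdef
        have hΦ : Measurable Φ :=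
          (ENNReal.measurable_ofReal.comp (Real.measurable_exp.comp
            ((Finset.measurable_sum _ fun i _ => measurable_pi_apply i).const_mul h))).indicator hT
        set G : (↥(Finset.range (k + 1)) → ℝ) → ENNReal := fun v => Φ (ext (k + 1) v) with hGdef
        have hG : Measurable G := hΦ.comp (hext (k + 1))
        have hmemT : ∀ ω : Ω,
            ext (k + 1) (fun j : ↥(Finset.range (k + 1)) => Y j ω) ∈ T ↔ ω ∈ B (k + 1) := by
          intro ω
          constructor
          · intro hyp j hj
            have := hyp j hj
            rwa [hextS (k + 1) ω j (Finset.mem_range.1 hj)] at this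
          · intro hyp j hj
            rw [Set.mem_setOf_eq] at hyp
            have := hyp j hj
            rwa [hextS (k + 1) ω j (Finset.mem_range.1 hj)]
        have hGeq : ∀ ω, G (fun j => Y j ω) = (B (k + 1)).indicator (g k) ω := by
          intro ω
          by_cases hωB : ω ∈ B (k + 1)
          · rw [Set.indicator_of_mem hωB, hGdef]
            simp only [hΦdef]
            rw [Set.indicator_of_mem ((hmemT ω).2 hωB)]
            rw [hextS (k + 1) ω k (Nat.lt_succ_self k)]
          · rw [Set.indicator_of_notMem hωB, hGdef]
            simp only [hΦdef]
            rw [Set.indicator_of_notMem (fun hc => hωB ((hmemT ω).1 hc))]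
        have hmul : ∀ ω, (B (k + 1)).indicator (g (k + 1)) ω =
            G (fun j => Y j ω) * ENNReal.ofReal (Real.exp (h * Y (k + 1) ω)) := by
          intro ω
          rw [hGeq ω]
          by_cases hωB : ω ∈ B (k + 1)
          · rw [Set.indicator_of_mem hωB, Set.indicator_of_mem hωB]
            have hsplit : S (k + 2) ω = S (k + 1) ω + Y (k + 1) ω := by
              rw [hS, hS, Finset.sum_range_succ]
            simp only [hgdef]
            rw [hsplit, mul_add, Real.exp_add, ENNReal.ofReal_mul (Real.exp_pos _).le]
          · rw [Set.indicator_of_notMem hωB, Set.indicator_of_notMem hωB, zero_mul]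
        calc c (k + 1) = ∫⁻ ω, (B (k + 1)).indicator (g (k + 1)) ω ∂P :=
              (lintegral_indicator (hBmeas _) _).symm
          _ = ∫⁻ ω, G (fun j => Y j ω) * ENNReal.ofReal (Real.exp (h * Y (k + 1) ω)) ∂P :=
              lintegral_congr hmul
          _ ≤ ∫⁻ ω, G (fun j => Y j ω) ∂P :=
              Stmt4Aux.le_aux hmeas hindep h (k + 1) G hG (hbound (k + 1))
          _ = ∫⁻ ω, (B (k + 1)).indicator (g k) ω ∂P := lintegral_congr hGeq
          _ = ∫⁻ ω in B (k + 1), g k ω ∂P := lintegral_indicator (hBmeas _) _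
      -- Step 2 : e^{hu} P(A k) ≤ ∫⁻_{A k} g k
      have h2 : ENNReal.ofReal (Real.exp (h * u)) * P (A k) ≤ ∫⁻ ω in A k, g k ω ∂P := by
        rw [← setLIntegral_const (A k) (ENNReal.ofReal (Real.exp (h * u)))]
        refine setLIntegral_mono (hψ (k + 1)) fun ω hω => ?_
        have hlt : u < S (k + 1) ω := hω.2
        exact ENNReal.ofReal_le_ofReal (Real.exp_le_exp.2
          (mul_le_mul_of_nonneg_left hlt.le hh))
      -- Step 3 : A k and B (k+1) partition B k
      have hdisj : Disjoint (A k) (B (k + 1)) := by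
        rw [Set.disjoint_left]
        intro ω hωA hωB
        have h1' : u < S (k + 1) ω := hωA.2
        have h2' : S (k + 1) ω ≤ u := hωB k (Finset.mem_range.2 (Nat.lt_succ_self k))
        exact absurd h1' (not_lt.2 h2')
      have hunion : A k ∪ B (k + 1) = B k := by
        ext ω
        constructor
        · rintro (hωA | hωB)
          · exact hωA.1
          · intro j hj
            exact hωB j (Finset.mem_range.2 (Nat.lt_succ_of_lt (Finset.mem_range.1 hj)))
        · intro hωB
          rcases le_or_gt (S (k + 1) ω) u with hle | hlt
          · right
            intro j hj
            rcases Nat.lt_succ_iff_lt_or_eq.1 (Finset.mem_range.1 hj) with hj' | rfl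
            · exact hωB j (Finset.mem_range.2 hj')
            · exact hle
          · exact Or.inl ⟨hωB, hlt⟩
      have h3 : (∫⁻ ω in A k, g k ω ∂P) + ∫⁻ ω in B (k + 1), g k ω ∂P = c k := by
        rw [← lintegral_union (hBmeas (k + 1)) hdisj, hunion]
      calc ENNReal.ofReal (Real.exp (h * u)) * P (A k) + c (k + 1)
          ≤ (∫⁻ ω in A k, g k ω ∂P) + ∫⁻ ω in B (k + 1), g k ω ∂P := add_le_add h2 h1
        _ = c k := h3
    -- telescoping
    have hmain : ∀ n, (∑ k ∈ Finset.range n, ENNReal.ofReal (Real.exp (h * u)) * P (A k)) + c n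
        ≤ c 0 := by
      intro n
      induction n with
      | zero => simp
      | succ n ih =>
        calc (∑ k ∈ Finset.range (n + 1), ENNReal.ofReal (Real.exp (h * u)) * P (A k)) + c (n + 1)
            = (∑ k ∈ Finset.range n, ENNReal.ofReal (Real.exp (h * u)) * P (A k)) +
              (ENNReal.ofReal (Real.exp (h * u)) * P (A n) + c (n + 1)) := by
              rw [Finset.sum_range_succ, add_assoc]
          _ ≤ (∑ k ∈ Finset.range n, ENNReal.ofReal (Real.exp (h * u)) * P (A k)) + c n :=
              add_le_add_right (hstep n) _
          _ ≤ c 0 := ih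
    have hsum : ENNReal.ofReal (Real.exp (h * u)) * ∑' k, P (A k) ≤ c 0 := by
      rw [← ENNReal.tsum_mul_left, ENNReal.tsum_eq_iSup_nat]
      refine iSup_le fun n => ?_
      exact le_trans (le_add_right le_rfl) (hmain n)
    have hcover : (⋃ k : ℕ, {ω | u < S (k + 1) ω}) ⊆ ⋃ k, A k := by
      intro ω hω
      simp only [Set.mem_iUnion, Set.mem_setOf_eq] at hω
      refine Set.mem_iUnion.2 ⟨Nat.find hω, ?_, Nat.find_spec hω⟩
      intro j hj
      exact le_of_not_gt (Nat.find_min hω (Finset.mem_range.1 hj))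
    have hP : P (⋃ k : ℕ, {ω | u < S (k + 1) ω}) ≤ ∑' k, P (A k) :=
      (measure_mono hcover).trans (measure_iUnion_le _)
    have hinv : ENNReal.ofReal (Real.exp (-h * u)) * ENNReal.ofReal (Real.exp (h * u)) = 1 := by
      rw [← ENNReal.ofReal_mul (Real.exp_pos _).le, ← Real.exp_add]
      norm_num
    constructor
    · calc P (⋃ k : ℕ, {ω | u < S (k + 1) ω}) ≤ ∑' k, P (A k) := hP
        _ = ENNReal.ofReal (Real.exp (-h * u)) *
            (ENNReal.ofReal (Real.exp (h * u)) * ∑' k, P (A k)) := by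
            rw [← mul_assoc, hinv, one_mul]
        _ ≤ ENNReal.ofReal (Real.exp (-h * u)) * c 0 := mul_le_mul_right hsum _
        _ = ENNReal.ofReal (Real.exp (-h * u)) *
            ∫⁻ ω, ENNReal.ofReal (Real.exp (h * Y 0 ω)) ∂P := by rw [hc0]
    · calc ENNReal.ofReal (Real.exp (-h * u)) *
            (∫⁻ ω, ENNReal.ofReal (Real.exp (h * Y 0 ω)) ∂P)
          ≤ ENNReal.ofReal (Real.exp (-h * u)) * 1 := mul_le_mul_right (hbound 0) _
        _ = ENNReal.ofReal (Real.exp (-h * u)) := mul_one _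
  · -- second part : sup_k E[e^{h S_k}] ≤ 1
    have claim2 : ∀ k : ℕ, ∫⁻ ω, ENNReal.ofReal (Real.exp (h * S k ω)) ∂P ≤ 1 := by
      intro k
      induction k with
      | zero =>
        have hEq : ∀ ω, ENNReal.ofReal (Real.exp (h * S 0 ω)) = 1 := by
          intro ω; simp [hS 0 ω]
        rw [lintegral_congr hEq]
        simp
      | succ k ih =>
        set Φ : (ℕ → ℝ) → ENNReal :=
          fun w => ENNReal.ofReal (Real.exp (h * ∑ i ∈ Finset.range k, w i)) with hΦdef
        have hΦ : Measurable Φ :=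
          ENNReal.measurable_ofReal.comp (Real.measurable_exp.comp
            ((Finset.measurable_sum _ fun i _ => measurable_pi_apply i).const_mul h))
        set G : (↥(Finset.range k) → ℝ) → ENNReal := fun v => Φ (ext k v) with hGdef
        have hG : Measurable G := hΦ.comp (hext k)
        have hGeq : ∀ ω, G (fun j => Y j ω) = ENNReal.ofReal (Real.exp (h * S k ω)) := by
          intro ω
          rw [hGdef]
          simp only [hΦdef]
          congr 1
          rw [hS k ω]
          refine congrArg Real.exp (congrArg (h * ·) ?_)
          refine Finset.sum_congr rfl fun i hi => hextY k ω i hi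
        have hmul : ∀ ω, ENNReal.ofReal (Real.exp (h * S (k + 1) ω)) =
            G (fun j => Y j ω) * ENNReal.ofReal (Real.exp (h * Y k ω)) := by
          intro ω
          rw [hGeq ω]
          have hsplit : S (k + 1) ω = S k ω + Y k ω := by
            rw [hS, hS, Finset.sum_range_succ]
          rw [hsplit, mul_add, Real.exp_add, ENNReal.ofReal_mul (Real.exp_pos _).le]
        calc ∫⁻ ω, ENNReal.ofReal (Real.exp (h * S (k + 1) ω)) ∂P
            = ∫⁻ ω, G (fun j => Y j ω) * ENNReal.ofReal (Real.exp (h * Y k ω)) ∂P :=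
              lintegral_congr hmul
          _ ≤ ∫⁻ ω, G (fun j => Y j ω) ∂P := Stmt4Aux.le_aux hmeas hindep h k G hG (hbound k)
          _ = ∫⁻ ω, ENNReal.ofReal (Real.exp (h * S k ω)) ∂P := lintegral_congr hGeq
          _ ≤ 1 := ih
    exact iSup_le fun k => claim2 (k + 1)
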